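/- Let $L\ge 1$, $k\ge 2$ be integers, $\mathbb{F}$ a field, and let $f:[L]^k\to\mathbb{F}$ satisfy $f(\ell_1,\dots,\ell_k)\ne 0$ whenever $\ell_1=\dots=\ell_k$, and $f(\ell_1,\dots,\ell_k)=0$ whenever $\ell_1,\dots,\ell_k$ are not all equal. Then the slice rank of $f$ equals $L$. -/

import Mathlib

open Finset

/-- Generalized (weak) slice-rank-one over an arbitrary index type. -/
def SRone {L : ℕ} {F : Type*} [Field F] {ι : Type*} (f : (ι → Fin L) → F) : Prop :=
  ∃ (i : ι) (G : Fin L → F) (H : ({j : ι // j ≠ i} → Fin L) → F),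
    ∀ x, f x = G (x i) * H (fun j => x j.1)

lemma SRone_zero {L : ℕ} {F : Type*} [Field F] {ι : Type*} [Nonempty ι] :
    SRone (0 : (ι → Fin L) → F) :=
  ⟨Classical.arbitrary ι, 0, fun _ => 0, fun x => by simp⟩

/-- Any finite-dimensional subspace of `Fin L → F` contains a vector whose support
has size at least the dimension. -/
lemma exists_big_support {L : ℕ} {F : Type*} [Field F] [DecidableEq F]
    (W : Submodule F (Fin L → F)) :
    ∃ u ∈ W, Module.finrank F W ≤ (Finset.univ.filter (fun ℓ => u ℓ ≠ 0)).card := by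
  set c : (Fin L → F) → ℕ := fun u => (Finset.univ.filter (fun ℓ => u ℓ ≠ 0)).card with hc
  set T : Set ℕ := c '' (W : Set (Fin L → F)) with hT
  have hTne : T.Nonempty := ⟨c 0, 0, W.zero_mem, rfl⟩
  have hTbdd : BddAbove T := by
    refine ⟨L, fun n hn => ?_⟩
    obtain ⟨u, _, rfl⟩ := hn
    calc c u ≤ (Finset.univ : Finset (Fin L)).card := Finset.card_le_card (Finset.filter_subset _ _)
    _ = L := by simp
  obtain ⟨u₀, hu₀W, hu₀c⟩ := Nat.sSup_mem hTne hTbdd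
  refine ⟨u₀, hu₀W, ?_⟩
  by_contra hlt
  push_neg at hlt
  -- restriction map to the support of u₀
  set A : Finset (Fin L) := Finset.univ.filter (fun ℓ => u₀ ℓ ≠ 0) with hA
  have hAcard : A.card < Module.finrank F W := hlt
  let ρ : W →ₗ[F] (A → F) :=
    { toFun := fun w a => w.1 a.1
      map_add' := fun w w' => rfl
      map_smul' := fun m w => rfl }
  have hrn := LinearMap.finrank_range_add_finrank_ker ρ
  have hrange : Module.finrank F (LinearMap.range ρ) ≤ A.card := by
    calc Module.finrank F (LinearMap.range ρ) ≤ Module.finrank F (↥A → F) :=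
        Submodule.finrank_le _
    _ = A.card := by rw [Module.finrank_fintype_fun_eq_card, Fintype.card_coe]
  have hker : 0 < Module.finrank F (LinearMap.ker ρ) := by omega
  replace hker := Module.nontrivial_of_finrank_pos hker
  obtain ⟨w, hwne⟩ := exists_ne (0 : LinearMap.ker ρ)
  set wv : Fin L → F := w.1.1 with hwv
  have hwvW : wv ∈ W := w.1.2
  have hwker : ρ w.1 = 0 := w.2
  have hw0 : ∀ ℓ ∈ A, wv ℓ = 0 := by
    intro ℓ hℓ
    exact congrFun hwker ⟨ℓ, hℓ⟩
  have hwne' : wv ≠ 0 := by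
    intro h
    exact hwne (Subtype.ext (Subtype.ext h))
  obtain ⟨ℓ₀, hℓ₀⟩ : ∃ ℓ₀, wv ℓ₀ ≠ 0 := by
    by_contra h
    push_neg at h
    exact hwne' (funext h)
  have hℓ₀A : ℓ₀ ∉ A := fun h => hℓ₀ (hw0 ℓ₀ h)
  -- u₀ + w has strictly bigger support
  have hsub : A ⊂ Finset.univ.filter (fun ℓ => (u₀ + wv) ℓ ≠ 0) := by
    constructor
    · intro ℓ hℓ
      simp only [hA, Finset.mem_filter, Finset.mem_univ, true_and] at hℓ ⊢
      rw [Pi.add_apply, hw0 ℓ (by simp [hA, hℓ])]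
      simpa using hℓ
    · intro hcon
      have : ℓ₀ ∈ A := by
        apply hcon
        simp only [Finset.mem_filter, Finset.mem_univ, true_and]
        rw [Pi.add_apply]
        have hu0 : u₀ ℓ₀ = 0 := by
          by_contra h
          exact hℓ₀A (by simp [hA, h])
        rw [hu0, zero_add]
        exact hℓ₀
      exact hℓ₀A this
  have hlt2 : c u₀ < c (u₀ + wv) := Finset.card_lt_card hsub
  have hle : c (u₀ + wv) ≤ sSup T :=
    le_csSup hTbdd ⟨u₀ + wv, W.add_mem hu₀W hwvW, rfl⟩
  omega


lemma exists_annihilator {L : ℕ} {F : Type*} [Field F] [DecidableEq F]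
    {τ : Type*} (S : Finset τ) (G : τ → Fin L → F) :
    ∃ u : Fin L → F, (∀ t ∈ S, ∑ ℓ, u ℓ * G t ℓ = 0) ∧
      L ≤ (Finset.univ.filter (fun ℓ => u ℓ ≠ 0)).card + S.card := by
  classical
  let dot : (Fin L → F) → (τ → (Fin L → F)) → Prop := fun _ _ => True
  let Φ : (Fin L → F) →ₗ[F] (↥S → F) := LinearMap.pi fun t =>
    { toFun := fun u => ∑ ℓ, u ℓ * G t.1 ℓ
      map_add' := by intros; simp [add_mul, Finset.sum_add_distrib]
      map_smul' := by intros; simp [Finset.mul_sum, mul_assoc]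
      }
  obtain ⟨u, huW, hucard⟩ := exists_big_support (LinearMap.ker Φ)
  refine ⟨u, ?_, ?_⟩
  · intro t ht
    exact congrFun (LinearMap.mem_ker.mp huW) ⟨t, ht⟩
  · have hrn := LinearMap.finrank_range_add_finrank_ker Φ
    have hdom : Module.finrank F (Fin L → F) = L := by
      rw [Module.finrank_fintype_fun_eq_card, Fintype.card_fin]
    have hrange : Module.finrank F (LinearMap.range Φ) ≤ S.card := by
      calc Module.finrank F (LinearMap.range Φ) ≤ Module.finrank F (↥S → F) :=
          Submodule.finrank_le _
      _ = S.card := by rw [Module.finrank_fintype_fun_eq_card, Fintype.card_coe]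
    omega
lemma base_two {F : Type*} [Field F] {ι : Type} [Fintype ι] [DecidableEq ι]
    (hcard : Fintype.card ι = 2) {L : ℕ} (A : Finset (Fin L))
    (f : (ι → Fin L) → F)
    (hA : ∀ ℓ ∈ A, f (fun _ => ℓ) ≠ 0)
    (hsupp : ∀ x : ι → Fin L, (∀ ℓ ∈ A, x ≠ fun _ => ℓ) → f x = 0)
    {τ : Type} (T : Finset τ) (g : τ → (ι → Fin L) → F)
    (hg : ∀ t ∈ T, SRone (g t))
    (hf : ∀ x, f x = ∑ t ∈ T, g t x) : A.card ≤ T.card := by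
  classical
  have hne : Nonempty ι := by
    rw [← Fintype.card_pos_iff, hcard]; omega
  -- totalize g
  set g₀ : τ → (ι → Fin L) → F := fun t => if t ∈ T then g t else 0 with hg₀
  have hg₀tot : ∀ t, SRone (g₀ t) := by
    intro t
    by_cases ht : t ∈ T
    · simpa [hg₀, ht] using hg t ht
    · simpa [hg₀, ht] using SRone_zero
  have hf₀ : ∀ x, f x = ∑ t ∈ T, g₀ t x := by
    intro x
    rw [hf x]
    exact Finset.sum_congr rfl fun t ht => by simp [hg₀, ht]
  clear_value g₀
  clear hf hg
  choose i G H hGH using hg₀tot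
  obtain ⟨a, b, hab, huniv⟩ : ∃ a b : ι, a ≠ b ∧ (Finset.univ : Finset ι) = {a, b} :=
    Finset.card_eq_two.mp (by rw [Finset.card_univ, hcard])
  have hmem : ∀ j : ι, j = a ∨ j = b := by
    intro j
    have := Finset.mem_univ j
    rw [huniv] at this
    simpa using this
  set pair : Fin L → Fin L → (ι → Fin L) := fun x y j => if j = a then x else y with hpair
  -- each term's rows lie on a line
  have hw : ∀ t, ∃ w : Fin L → F, ∀ x, ∃ c : F, (fun y => g₀ t (pair x y)) = c • w := by
    intro t
    rcases hmem (i t) with ht | ht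
    · refine ⟨fun y => H t (fun _ => y), fun x => ⟨G t x, ?_⟩⟩
      funext y
      rw [hGH t (pair x y)]
      have h1 : pair x y (i t) = x := by rw [ht]; simp [hpair]
      have h2 : (fun (j : {j : ι // j ≠ i t}) => pair x y j.1) = fun _ => y := by
        funext j
        have : j.1 ≠ a := ht ▸ j.2
        simp [hpair, this]
      rw [h1, h2]
      rfl
    · refine ⟨G t, fun x => ⟨H t (fun _ => x), ?_⟩⟩
      funext y
      rw [hGH t (pair x y)]
      have h1 : pair x y (i t) = y := by
        rw [ht]; simp [hpair, Ne.symm hab]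
      have h2 : (fun (j : {j : ι // j ≠ i t}) => pair x y j.1) = fun _ => x := by
        funext j
        have : j.1 = a := (hmem j.1).resolve_right (ht ▸ j.2)
        simp [hpair, this]
      rw [h1, h2]
      simp [mul_comm]
  choose w hwspec using hw
  set V : Submodule F (Fin L → F) := Submodule.span F ((T.image w : Finset _) : Set (Fin L → F))
    with hV
  have hrow_mem : ∀ x : Fin L, (fun y => f (pair x y)) ∈ V := by
    intro x
    have : (fun y => f (pair x y)) = ∑ t ∈ T, fun y => g₀ t (pair x y) := by
      funext y
      rw [hf₀ (pair x y)]
      simp [Finset.sum_apply]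
    rw [this]
    apply Submodule.sum_mem
    intro t ht
    obtain ⟨c, hc⟩ := hwspec t x
    rw [hc]
    exact Submodule.smul_mem _ _ (Submodule.subset_span (by simp; exact ⟨t, ht, rfl⟩))
  -- rows for ℓ ∈ A are linearly independent
  have hrowval : ∀ ℓ ∈ A, ∀ y : Fin L, f (pair ℓ y) = if y = ℓ then f (fun _ => ℓ) else 0 := by
    intro ℓ hℓ y
    by_cases hy : y = ℓ
    · subst hy
      have : pair y y = fun _ => y := by
        funext j; by_cases hj : j = a <;> simp [hpair, hj]
      rw [this, if_pos rfl]
    · rw [if_neg hy]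
      apply hsupp
      intro m hm hcon
      have h1 : ℓ = m := by
        have := congrFun hcon a
        simpa [hpair] using this
      have h2 : y = m := by
        have := congrFun hcon b
        simpa [hpair, Ne.symm hab] using this
      exact hy (h2.trans h1.symm)
  have hli : LinearIndependent F (fun ℓ : A => (⟨fun y => f (pair ℓ.1 y), hrow_mem ℓ.1⟩ : V)) := by
    apply LinearIndependent.of_comp V.subtype
    rw [Fintype.linearIndependent_iff]
    intro c hc ℓ₀
    have := congrFun hc ℓ₀.1
    simp only [Finset.sum_apply, Pi.smul_apply, smul_eq_mul, Submodule.coe_subtype,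
      Function.comp_apply, Pi.zero_apply] at this
    rw [Finset.sum_eq_single ℓ₀] at this
    · rw [hrowval ℓ₀.1 ℓ₀.2 ℓ₀.1, if_pos rfl] at this
      rcases mul_eq_zero.mp this with h | h
      · exact h
      · exact absurd h (hA ℓ₀.1 ℓ₀.2)
    · intro ℓ _ hℓne
      rw [hrowval ℓ.1 ℓ.2 ℓ₀.1, if_neg, mul_zero]
      intro hcon
      exact hℓne (Subtype.ext hcon.symm)
    · intro h
      exact absurd (Finset.mem_univ ℓ₀) h
  have h1 : Fintype.card A ≤ Module.finrank F V := hli.fintype_card_le_finrank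
  have h2 : Module.finrank F V ≤ (T.image w).card := finrank_span_finset_le_card _
  have h3 : (T.image w).card ≤ T.card := Finset.card_image_le
  rw [Fintype.card_coe] at h1
  omega
lemma lower_bound {F : Type*} [Field F] [DecidableEq F] :
    ∀ n : ℕ, 2 ≤ n → ∀ (ι : Type) (instF : Fintype ι) (instD : DecidableEq ι),
      Fintype.card ι = n →
      ∀ (L : ℕ) (A : Finset (Fin L)) (f : (ι → Fin L) → F) (τ : Type) (T : Finset τ)
        (g : τ → (ι → Fin L) → F),
        (∀ ℓ ∈ A, f (fun _ => ℓ) ≠ 0) →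
        (∀ x, (∀ ℓ ∈ A, x ≠ fun _ => ℓ) → f x = 0) →
        (∀ t ∈ T, SRone (g t)) →
        (∀ x, f x = ∑ t ∈ T, g t x) → A.card ≤ T.card := by
  intro n hn
  induction n, hn using Nat.le_induction with
  | base =>
    intro ι instF instD hcard L A f τ T g hA hsupp hg hf
    exact base_two hcard A f hA hsupp T g hg hf
  | succ n hn ih =>
    intro ι instF instD hcard L A f τ T g hA hsupp hg hf
    classical
    have hnonempty : Nonempty ι := by
      rw [← Fintype.card_pos_iff, hcard]; omega
    -- totalize g
    set g₀ : τ → (ι → Fin L) → F := fun t => if t ∈ T then g t else 0 with hg₀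
    have hg₀tot : ∀ t, SRone (g₀ t) := by
      intro t
      by_cases ht : t ∈ T
      · simpa [hg₀, ht] using hg t ht
      · simpa [hg₀, ht] using SRone_zero
    have hf₀ : ∀ x, f x = ∑ t ∈ T, g₀ t x := by
      intro x
      rw [hf x]
      exact Finset.sum_congr rfl fun t ht => by simp [hg₀, ht]
    clear_value g₀
    clear hf hg
    choose i G H hGH using hg₀tot
    obtain ⟨i₀⟩ := hnonempty
    have hcard' : Fintype.card {j : ι // j ≠ i₀} = n := by
      have h1 : Fintype.card {j : ι // ¬ (j = i₀)} = Fintype.card ι - 1 := by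
        rw [Fintype.card_subtype_compl, Fintype.card_subtype_eq]
      have h2 : Fintype.card {j : ι // j ≠ i₀} = Fintype.card {j : ι // ¬ (j = i₀)} := rfl
      omega
    set S : Finset τ := T.filter (fun t => i t = i₀) with hS
    obtain ⟨u, huann, hucard⟩ := exists_annihilator S G
    set ext : ({j : ι // j ≠ i₀} → Fin L) → Fin L → (ι → Fin L) :=
      fun y ℓ j => if hj : j = i₀ then ℓ else y ⟨j, hj⟩ with hext
    have hext_i₀ : ∀ y ℓ, ext y ℓ i₀ = ℓ := by intro y ℓ; simp [hext]
    have hext_ne : ∀ y ℓ (j : {j : ι // j ≠ i₀}), ext y ℓ j.1 = y j := by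
      intro y ℓ j; simp [hext, j.2]
    set f' : ({j : ι // j ≠ i₀} → Fin L) → F := fun y => ∑ ℓ, u ℓ * f (ext y ℓ) with hf'
    set g' : τ → ({j : ι // j ≠ i₀} → Fin L) → F :=
      fun t y => ∑ ℓ, u ℓ * g₀ t (ext y ℓ) with hg'
    set A' : Finset (Fin L) := A ∩ Finset.univ.filter (fun ℓ => u ℓ ≠ 0) with hA'
    -- terms sliced at i₀ vanish after contracting with u
    have hSzero : ∀ t ∈ S, ∀ y, g' t y = 0 := by
      intro t ht y
      have hti : i t = i₀ := (Finset.mem_filter.mp ht).2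
      set cH : F := H t (fun j : {j : ι // j ≠ i t} => y ⟨j.1, hti ▸ j.2⟩) with hcH
      have hterm : ∀ ℓ, g₀ t (ext y ℓ) = G t ℓ * cH := by
        intro ℓ
        rw [hGH t (ext y ℓ)]
        congr 1
        · rw [hti, hext_i₀]
        · rw [hcH]
          congr 1
          funext j
          have hj : j.1 ≠ i₀ := hti ▸ j.2
          simp [hext, hj]
      calc g' t y = ∑ ℓ, u ℓ * (G t ℓ * cH) := by
            refine Finset.sum_congr rfl fun ℓ _ => by rw [hterm]
      _ = (∑ ℓ, u ℓ * G t ℓ) * cH := by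
            rw [Finset.sum_mul]
            exact Finset.sum_congr rfl fun ℓ _ => (mul_assoc _ _ _).symm
      _ = 0 := by rw [huann t ht, zero_mul]
    -- remaining terms stay slice-rank one
    have hg'SR : ∀ t ∈ T \ S, SRone (g' t) := by
      intro t ht
      have htT : t ∈ T := (Finset.mem_sdiff.mp ht).1
      have hti : i t ≠ i₀ := by
        intro h
        exact (Finset.mem_sdiff.mp ht).2 (Finset.mem_filter.mpr ⟨htT, h⟩)
      refine ⟨⟨i t, hti⟩, G t, fun z => ∑ ℓ, u ℓ *
        H t (fun j => if hj : j.1 = i₀ then ℓ else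
          z ⟨⟨j.1, hj⟩, fun hcon => j.2 (congrArg Subtype.val hcon)⟩), ?_⟩
      intro y
      show g' t y = G t (y ⟨i t, hti⟩) * ∑ ℓ, u ℓ *
        H t (fun j => if hj : j.1 = i₀ then ℓ else y ⟨j.1, hj⟩)
      rw [hg', Finset.mul_sum]
      refine Finset.sum_congr rfl fun ℓ _ => ?_
      rw [hGH t (ext y ℓ)]
      have h1 : ext y ℓ (i t) = y ⟨i t, hti⟩ := hext_ne y ℓ ⟨i t, hti⟩
      have h2 : (fun (j : {j : ι // j ≠ i t}) => ext y ℓ j.1) =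
          (fun j => if hj : j.1 = i₀ then ℓ else y ⟨j.1, hj⟩) := by
        funext j
        simp [hext]
      rw [h1, h2, mul_left_comm]
    -- the contracted tensor
    have hf'sum : ∀ y, f' y = ∑ t ∈ T \ S, g' t y := by
      intro y
      have h1 : f' y = ∑ t ∈ T, g' t y := by
        rw [hf']
        calc ∑ ℓ, u ℓ * f (ext y ℓ) = ∑ ℓ, ∑ t ∈ T, u ℓ * g₀ t (ext y ℓ) := by
              refine Finset.sum_congr rfl fun ℓ _ => by rw [hf₀, Finset.mul_sum]
        _ = ∑ t ∈ T, ∑ ℓ, u ℓ * g₀ t (ext y ℓ) := Finset.sum_comm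
        _ = ∑ t ∈ T, g' t y := rfl
      have h2 : ∑ t ∈ T \ S, g' t y + ∑ t ∈ S, g' t y = ∑ t ∈ T, g' t y :=
        Finset.sum_sdiff (Finset.filter_subset _ T)
      have h3 : ∑ t ∈ S, g' t y = 0 := Finset.sum_eq_zero fun t ht => hSzero t ht y
      rw [h1, ← h2, h3, add_zero]
    -- support properties of the contracted tensor
    obtain ⟨j₁⟩ : Nonempty {j : ι // j ≠ i₀} := by
      rw [← Fintype.card_pos_iff, hcard']; omega
    have hA'h : ∀ ℓ ∈ A', f' (fun _ => ℓ) ≠ 0 := by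
      intro ℓ hℓ
      have hℓA : ℓ ∈ A := (Finset.mem_inter.mp hℓ).1
      have hu : u ℓ ≠ 0 := by
        have := (Finset.mem_inter.mp hℓ).2
        simpa using this
      have hval : f' (fun _ => ℓ) = u ℓ * f (fun _ => ℓ) := by
        show ∑ ℓ' : Fin L, u ℓ' * f (ext (fun _ => ℓ) ℓ') = u ℓ * f (fun _ => ℓ)
        rw [Finset.sum_eq_single ℓ]
        · congr 1
          congr 1
          funext j
          by_cases hj : j = i₀ <;> simp [hext, hj]
        · intro ℓ' _ hne
          suffices f (ext (fun _ => ℓ) ℓ') = 0 by rw [this, mul_zero]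
          apply hsupp
          intro m hm hcon
          have e1 : ℓ' = m := by rw [← hext_i₀ (fun _ => ℓ) ℓ']; exact congrFun hcon i₀
          have e2 : ℓ = m := by
            rw [← hext_ne (fun _ => ℓ) ℓ' j₁]
            exact congrFun hcon j₁.1
          exact hne (e1.trans e2.symm)
        · intro h
          exact absurd (Finset.mem_univ ℓ) h
      rw [hval]
      exact mul_ne_zero hu (hA ℓ hℓA)
    have hsupp' : ∀ y, (∀ ℓ ∈ A', y ≠ fun _ => ℓ) → f' y = 0 := by
      intro y hy
      show ∑ ℓ' : Fin L, u ℓ' * f (ext y ℓ') = 0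
      apply Finset.sum_eq_zero
      intro ℓ' _
      by_cases hu : u ℓ' = 0
      · rw [hu, zero_mul]
      · suffices f (ext y ℓ') = 0 by rw [this, mul_zero]
        apply hsupp
        intro m hm hcon
        have e1 : ℓ' = m := by rw [← hext_i₀ y ℓ']; exact congrFun hcon i₀
        have e2 : y = fun _ => m := by
          funext j
          rw [← hext_ne y ℓ' j]
          exact congrFun hcon j.1
        subst e1
        exact hy ℓ' (Finset.mem_inter.mpr ⟨hm, by simpa using hu⟩) e2
    -- apply the induction hypothesis
    have hIH : A'.card ≤ (T \ S).card :=
      ih {j : ι // j ≠ i₀} inferInstance inferInstance hcard' L A' f' τ (T \ S) g'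
        hA'h hsupp' hg'SR hf'sum
    -- counting
    have hc1 : A.card + (Finset.univ.filter (fun ℓ => u ℓ ≠ 0)).card =
        A'.card + (A ∪ Finset.univ.filter (fun ℓ => u ℓ ≠ 0)).card := by
      rw [hA', ← Finset.card_inter_add_card_union]
    have hc2 : (A ∪ Finset.univ.filter (fun ℓ => u ℓ ≠ 0)).card ≤ L := by
      calc (A ∪ Finset.univ.filter (fun ℓ => u ℓ ≠ 0)).card ≤ (Finset.univ : Finset (Fin L)).card :=
            Finset.card_le_card (Finset.subset_univ _)
      _ = L := by simp
    have hc3 : (T \ S).card + S.card = T.card :=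
      Finset.card_sdiff_add_card_eq_card (Finset.filter_subset _ T)
    omega
/-- A function `f : [L]^k → F` has slice rank 1 if it factors as a nonzero function of one
coordinate times a nonzero function of the remaining `k-1` coordinates. -/
def IsSliceRankOne {k L : ℕ} {F : Type*} [Field F] (f : (Fin k → Fin L) → F) : Prop :=
  ∃ (i : Fin k) (g : Fin L → F) (h : ({j : Fin k // j ≠ i} → Fin L) → F),
    g ≠ 0 ∧ h ≠ 0 ∧ ∀ x, f x = g (x i) * h (fun j => x j.1)

/-- The slice rank of `f : [L]^k → F`: the least `r` such that `f` is a sum of `r`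
slice-rank-1 functions. -/
noncomputable def sliceRank {k L : ℕ} {F : Type*} [Field F] (f : (Fin k → Fin L) → F) : ℕ :=
  sInf {r : ℕ | ∃ g : Fin r → (Fin k → Fin L) → F,
    (∀ t, IsSliceRankOne (g t)) ∧ ∀ x, f x = ∑ t, g t x}

/-- A diagonal tensor with nonzero diagonal entries has slice rank `L`. -/
theorem stmt_5 {k L : ℕ} (hL : 1 ≤ L) (hk : 2 ≤ k) {F : Type*} [Field F]
    (f : (Fin k → Fin L) → F)
    (hdiag : ∀ x : Fin k → Fin L, (∀ i i', x i = x i') → f x ≠ 0)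
    (hoff : ∀ x : Fin k → Fin L, ¬ (∀ i i', x i = x i') → f x = 0) :
    sliceRank f = L := by
  classical
  have hk0 : 0 < k := by omega
  set i₀ : Fin k := ⟨0, hk0⟩ with hi₀
  -- membership: f is a sum of L slice-rank-one functions
  have hmem : L ∈ {r : ℕ | ∃ g : Fin r → (Fin k → Fin L) → F,
      (∀ t, IsSliceRankOne (g t)) ∧ ∀ x, f x = ∑ t, g t x} := by
    refine ⟨fun t x => (if x i₀ = t then (1 : F) else 0) *
      f (fun j => if j = i₀ then t else x j), ?_, ?_⟩
    · intro t
      refine ⟨i₀, fun s => if s = t then 1 else 0,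
        fun y => f (fun j => if hj : j = i₀ then t else y ⟨j, hj⟩), ?_, ?_, ?_⟩
      · intro hcon
        have := congrFun hcon t
        simp at this
      · intro hcon
        have := congrFun hcon (fun _ => t)
        simp only [Pi.zero_apply] at this
        have harg : (fun j => if hj : j = i₀ then t else t) = (fun _ : Fin k => t) := by
          funext j; split <;> rfl
        rw [harg] at this
        exact hdiag (fun _ => t) (fun _ _ => rfl) this
      · intro x
        have harg : (fun j => if j = i₀ then t else x j) =
            (fun j => if hj : j = i₀ then t else x j) := by
          funext j; by_cases hj : j = i₀ <;> simp [hj]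
        show (if x i₀ = t then (1:F) else 0) * f (fun j => if j = i₀ then t else x j) =
          (if x i₀ = t then (1:F) else 0) * f (fun j => if hj : j = i₀ then t else x j)
        rw [harg]
    · intro x
      have : ∀ t : Fin L, (if x i₀ = t then (1 : F) else 0) *
          f (fun j => if j = i₀ then t else x j) =
          if x i₀ = t then f (fun j => if j = i₀ then t else x j) else 0 := by
        intro t; split <;> simp
      rw [Finset.sum_congr rfl (fun t _ => this t), Finset.sum_ite_eq]
      have harg : (fun j => if j = i₀ then x i₀ else x j) = x := by
        funext j; split <;> simp_all
      simp [harg]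
  -- lower bound
  have hlow : ∀ r ∈ {r : ℕ | ∃ g : Fin r → (Fin k → Fin L) → F,
      (∀ t, IsSliceRankOne (g t)) ∧ ∀ x, f x = ∑ t, g t x}, L ≤ r := by
    rintro r ⟨g, hg, hf⟩
    have := lower_bound (F := F) k hk (Fin k) inferInstance inferInstance
      (Fintype.card_fin k) L Finset.univ f (Fin r) Finset.univ g
      (fun ℓ _ => hdiag (fun _ => ℓ) (fun _ _ => rfl))
      (fun x hx => by
        apply hoff
        intro hcon
        exact hx (x i₀) (Finset.mem_univ _) (funext fun i => hcon i i₀))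
      (fun t _ => by
        obtain ⟨i, G, H, _, _, hspec⟩ := hg t
        exact ⟨i, G, H, hspec⟩)
      (fun x => hf x)
    simpa using this
  exact le_antisymm (Nat.sInf_le hmem) (le_csInf ⟨L, hmem⟩ hlow)
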